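/- Let 𝔉(x,z) = Σ_{i,j≥0} A_{i,j} x^i z^j be a commutative formal group over H, regarded over H_ℚ, let ω̃(x) = Σ_{i≥0} ((id ⊗ ε)A_{i,1}) x^i, assume b_0 = (id ⊗ ε)A_{0,1} is invertible in H_ℚ, let 𝔤(x) = ∫_0^x dt/ω̃(t) ∈ H_ℚ[[x]] be the termwise formal antiderivative of 1/ω̃ with zero constant term, and let c ∈ H_ℚ ⊗̂_{R_ℚ} H_ℚ with (id ⊗ ε)c = 0 = (ε ⊗ id)c be such that (Δ𝔤)(𝔉(x⊗1,1⊗x)) = c + (𝔤⊗1)(x⊗1) + (1⊗𝔤)(1⊗x). Then 𝔤 has a compositional inverse 𝔤^{-1} ∈ H_ℚ[[x]] (its linear coefficient b_0 being invertible and its constant term zero), and 𝔉 is recovered by 𝔉(x⊗1, 1⊗x) = (Δ(𝔤^{-1}))(c + (𝔤⊗1)(x⊗1) + (1⊗𝔤)(1⊗x)), where Δ(𝔤^{-1}) denotes 𝔤^{-1} with Δ applied to all its coefficients, and the substitution is well defined since (ε⊗ε) applied to the constant term c of the argument is 0. -/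

import Mathlib

open scoped TensorProduct

noncomputable section

namespace FGHopf

variable {A B : Type*} [CommRing A] [CommRing B] {σ : Type*}

/-- Apply a map to all coefficients of a (multivariate) power series. -/
def mapCoeffs (f : A → B) (F : MvPowerSeries σ A) : MvPowerSeries σ B :=
  fun m => f (F m)

/-- Substitution of two power series `G`, `K` into a two-variable power series `w`
(the mathematically correct substitution whenever the relevant family of coefficients
is finitely supported, e.g. when `G` and `K` have zero constant term or `w` is a
polynomial). -/
def subst2 (w : MvPowerSeries (Fin 2) A) (G K : MvPowerSeries σ A) :
    MvPowerSeries σ A :=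
  fun m => ∑ᶠ p : ℕ × ℕ,
    MvPowerSeries.coeff (R := A) (Finsupp.single 0 p.1 + Finsupp.single 1 p.2) w *
      MvPowerSeries.coeff (R := A) m (G ^ p.1 * K ^ p.2)

/-- Substitution of a power series `G` into a one-variable power series `w`. -/
def subst1 (w : PowerSeries A) (G : MvPowerSeries σ A) : MvPowerSeries σ A :=
  fun m => ∑ᶠ n : ℕ, PowerSeries.coeff (R := A) n w * MvPowerSeries.coeff (R := A) m (G ^ n)

/-- Regard a two-variable series as a three-variable series in the first two variables,
mapping its coefficients by `f`. -/
def emb12 (f : A → B) (F : MvPowerSeries (Fin 2) A) : MvPowerSeries (Fin 3) B :=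
  fun m => if m 2 = 0 then
    f (F (Finsupp.single 0 (m 0) + Finsupp.single 1 (m 1))) else 0

/-- Regard a two-variable series as a three-variable series in the last two variables,
mapping its coefficients by `f`. -/
def emb23 (f : A → B) (F : MvPowerSeries (Fin 2) A) : MvPowerSeries (Fin 3) B :=
  fun m => if m 0 = 0 then
    f (F (Finsupp.single 0 (m 1) + Finsupp.single 1 (m 2))) else 0

/-- Regard a one-variable series as a two-variable series in the first variable `x⊗1`,
mapping its coefficients by `f`. -/
def inVar0 (f : A → B) (g : PowerSeries A) : MvPowerSeries (Fin 2) B :=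
  fun m => if m 1 = 0 then f (PowerSeries.coeff (R := A) (m 0) g) else 0

/-- Regard a one-variable series as a two-variable series in the second variable `1⊗x`,
mapping its coefficients by `f`. -/
def inVar1 (f : A → B) (g : PowerSeries A) : MvPowerSeries (Fin 2) B :=
  fun m => if m 0 = 0 then f (PowerSeries.coeff (R := A) (m 1) g) else 0

/-- Formal partial derivative of a multivariate power series with respect to the `i`-th
variable. -/
def pderiv (i : σ) (F : MvPowerSeries σ A) : MvPowerSeries σ A :=
  fun m => ((m i + 1 : ℕ) : A) * F (m + Finsupp.single i 1)

variable (R : Type*) [CommRing R] (H : Type*) [CommRing H] [HopfAlgebra R H]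

/-- `id ⊗ ε : H ⊗ H → H`. -/
def idCounit : H ⊗[R] H →ₗ[R] H :=
  (TensorProduct.rid R H).toLinearMap ∘ₗ
    LinearMap.lTensor H (Coalgebra.counit (R := R) (A := H))

/-- `ε ⊗ id : H ⊗ H → H`. -/
def counitId : H ⊗[R] H →ₗ[R] H :=
  (TensorProduct.lid R H).toLinearMap ∘ₗ
    LinearMap.rTensor H (Coalgebra.counit (R := R) (A := H))

/-- `Δ ⊗ id : H ⊗ H → H ⊗ H ⊗ H` (with the rightmost association). -/
def comulLeftTensor : H ⊗[R] H →ₗ[R] H ⊗[R] (H ⊗[R] H) :=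
  (TensorProduct.assoc R H H H).toLinearMap ∘ₗ
    LinearMap.rTensor H (Coalgebra.comul (R := R) (A := H))

/-- `id ⊗ Δ : H ⊗ H → H ⊗ H ⊗ H`. -/
def idTensorComul : H ⊗[R] H →ₗ[R] H ⊗[R] (H ⊗[R] H) :=
  LinearMap.lTensor H (Coalgebra.comul (R := R) (A := H))

/-- `a ↦ a ⊗ 1 : H ⊗ H → H ⊗ H ⊗ H`. -/
def incl12 : H ⊗[R] H →ₗ[R] H ⊗[R] (H ⊗[R] H) :=
  LinearMap.lTensor H ((TensorProduct.mk R H H).flip 1)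

/-- `a ↦ 1 ⊗ a : H ⊗ H → H ⊗ H ⊗ H`. -/
def incl23 : H ⊗[R] H →ₗ[R] H ⊗[R] (H ⊗[R] H) :=
  TensorProduct.mk R H (H ⊗[R] H) 1

/-- The flip `τ` of the two tensor factors of `H ⊗ H`. -/
def tau : H ⊗[R] H →ₗ[R] H ⊗[R] H := (TensorProduct.comm R H H).toLinearMap

/-- The unit axiom for a formal group `F` over the Hopf algebra `H`: applying `id ⊗ ε`
to all coefficients and setting the second variable to `0` yields the series `x`, and
symmetrically. -/
def UnitAxiom (F : MvPowerSeries (Fin 2) (H ⊗[R] H)) : Prop :=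
  (∀ n : ℕ, idCounit R H (F (Finsupp.single 0 n)) = if n = 1 then 1 else 0) ∧
  (∀ n : ℕ, counitId R H (F (Finsupp.single 1 n)) = if n = 1 then 1 else 0)

/-- The associativity axiom for a formal group `F` over the Hopf algebra `H`:
`((Δ ⊗ id)F)(F(x⊗1,1⊗x) ⊗ 1, 1⊗1⊗x) = ((id ⊗ Δ)F)(x⊗1⊗1, 1 ⊗ F(x⊗1,1⊗x))`. -/
def AssocAxiom (F : MvPowerSeries (Fin 2) (H ⊗[R] H)) : Prop :=
  subst2 (mapCoeffs (comulLeftTensor R H) F) (emb12 (incl12 R H) F)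
      (MvPowerSeries.X 2) =
  subst2 (mapCoeffs (idTensorComul R H) F) (MvPowerSeries.X 0)
      (emb23 (incl23 R H) F)

/-- The commutativity axiom: `F` is symmetric, `A_{i,j} = τ(A_{j,i})`. -/
def CommAxiom (F : MvPowerSeries (Fin 2) (H ⊗[R] H)) : Prop :=
  ∀ m : Fin 2 →₀ ℕ,
    F m = tau R H (F (Finsupp.single 0 (m 1) + Finsupp.single 1 (m 0)))

/-- A commutative formal group over the Hopf algebra `H`: a two-variable power series
with coefficients in `H ⊗ H`, with zero constant term, satisfying the unit,
associativity and commutativity axioms. -/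
def IsCommFormalGroup (F : MvPowerSeries (Fin 2) (H ⊗[R] H)) : Prop :=
  F 0 = 0 ∧ UnitAxiom R H F ∧ AssocAxiom R H F ∧ CommAxiom R H F


section Lemmas

variable {S T : Type*} [CommRing S] [CommRing T] {σ : Type*}

/-- total degree of a monomial exponent -/
def sdeg (m : σ →₀ ℕ) : ℕ := m.sum fun _ k => k

lemma sdeg_single (i : σ) (n : ℕ) : sdeg (Finsupp.single i n) = n := by
  simp [sdeg]

lemma sdeg_zero : sdeg (0 : σ →₀ ℕ) = 0 := by simp [sdeg]

lemma sdeg_add (a b : σ →₀ ℕ) : sdeg (a + b) = sdeg a + sdeg b := by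
  simp [sdeg, Finsupp.sum_add_index']

lemma sdeg_eq_zero {m : σ →₀ ℕ} (h : sdeg m = 0) : m = 0 := by
  rw [sdeg, Finsupp.sum] at h
  ext i
  by_cases hi : i ∈ m.support
  · exact (Finset.sum_eq_zero_iff.mp h i hi)
  · simpa using Finsupp.notMem_support_iff.mp hi

lemma pcoeff (n : ℕ) (f : PowerSeries S) :
    MvPowerSeries.coeff (R := S) (Finsupp.single () n) f = PowerSeries.coeff (R := S) n f := rfl

lemma pcoeff0 (f : PowerSeries S) :
    MvPowerSeries.coeff (R := S) (0 : Unit →₀ ℕ) f = PowerSeries.coeff (R := S) 0 f := by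
  rw [← pcoeff, Finsupp.single_zero]

lemma coeff_pow_of_lt {G : MvPowerSeries σ S} (hG : MvPowerSeries.coeff (R := S) 0 G = 0) :
    ∀ (n : ℕ) (m : σ →₀ ℕ), sdeg m < n → MvPowerSeries.coeff (R := S) m (G ^ n) = 0 := by
  intro n
  induction n with
  | zero => intro m h; omega
  | succ n ih =>
    intro m h
    classical
    rw [pow_succ, MvPowerSeries.coeff_mul]
    apply Finset.sum_eq_zero
    intro p hp
    rw [Finset.HasAntidiagonal.mem_antidiagonal] at hp
    by_cases h2 : p.2 = 0
    · rw [h2, hG, mul_zero]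
    · have h1 : 1 ≤ sdeg p.2 := by
        rcases Nat.eq_zero_or_pos (sdeg p.2) with h | h
        · exact absurd (sdeg_eq_zero h) h2
        · exact h
      have hsum : sdeg p.1 + sdeg p.2 = sdeg m := by rw [← sdeg_add, hp]
      rw [ih p.1 (by omega), zero_mul]

lemma coeff_pow_of_lt' {G : PowerSeries S} (hG : MvPowerSeries.coeff (R := S) 0 G = 0)
    {j n : ℕ} (h : j < n) : PowerSeries.coeff (R := S) j (G ^ n) = 0 := by
  rw [← pcoeff]
  exact coeff_pow_of_lt hG n _ (by rwa [sdeg_single])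

lemma subst1_eq_sum {w : PowerSeries S} {G : MvPowerSeries σ S}
    (hG : MvPowerSeries.coeff (R := S) 0 G = 0) {m : σ →₀ ℕ} {d : ℕ} (hd : sdeg m ≤ d) :
    MvPowerSeries.coeff (R := S) m (subst1 w G) = ∑ n ∈ Finset.range (d + 1),
      PowerSeries.coeff (R := S) n w * MvPowerSeries.coeff (R := S) m (G ^ n) := by
  show (∑ᶠ n : ℕ, PowerSeries.coeff (R := S) n w * MvPowerSeries.coeff (R := S) m (G ^ n)) = _
  apply finsum_eq_finset_sum_of_support_subset
  intro n hn
  simp only [Function.mem_support] at hn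
  simp only [Finset.coe_range, Set.mem_Iio]
  by_contra h
  push_neg at h
  exact hn (by rw [coeff_pow_of_lt hG n m (by omega), mul_zero])

lemma subst1_eq_sum_unit {w G : PowerSeries S}
    (hG : MvPowerSeries.coeff (R := S) 0 G = 0) {n d : ℕ} (hd : n ≤ d) :
    PowerSeries.coeff (R := S) n (subst1 w G) = ∑ j ∈ Finset.range (d + 1),
      PowerSeries.coeff (R := S) j w * PowerSeries.coeff (R := S) n (G ^ j) := by
  rw [← pcoeff, subst1_eq_sum (d := d) hG (by rwa [sdeg_single])]
  simp only [pcoeff]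

lemma subst1_coeff_zero {w : PowerSeries S} {G : MvPowerSeries σ S}
    (hw : PowerSeries.coeff (R := S) 0 w = 0) (hG : MvPowerSeries.coeff (R := S) 0 G = 0) :
    MvPowerSeries.coeff (R := S) 0 (subst1 w G) = 0 := by
  rw [subst1_eq_sum hG (le_of_eq sdeg_zero)]
  simp [hw]


lemma subst1_one {G : MvPowerSeries σ S} (hG : MvPowerSeries.coeff (R := S) 0 G = 0) :
    subst1 (1 : PowerSeries S) G = 1 := by
  apply MvPowerSeries.ext
  intro m
  rw [subst1_eq_sum hG (le_refl (sdeg m))]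
  rw [Finset.sum_eq_single 0]
  · simp
  · intro j _ hj
    rw [PowerSeries.coeff_one, if_neg hj, zero_mul]
  · intro h
    exact absurd (Finset.mem_range.mpr (Nat.succ_pos _)) h

lemma subst1_mul {w w' : PowerSeries S} {G : MvPowerSeries σ S}
    (hG : MvPowerSeries.coeff (R := S) 0 G = 0) :
    subst1 (w * w') G = subst1 w G * subst1 w' G := by
  classical
  apply MvPowerSeries.ext
  intro m
  set d := sdeg m with hd
  set f : ℕ × ℕ → S := fun p => PowerSeries.coeff (R := S) p.1 w * PowerSeries.coeff (R := S) p.2 w' *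
    MvPowerSeries.coeff (R := S) m (G ^ (p.1 + p.2)) with hf
  have hf0 : ∀ p : ℕ × ℕ, d < p.1 + p.2 → f p = 0 := by
    intro p hp
    rw [hf]
    simp only []
    rw [coeff_pow_of_lt hG _ m (by omega), mul_zero]
  have hL : MvPowerSeries.coeff (R := S) m (subst1 (w * w') G) =
      ∑ p ∈ Finset.range (2 * d + 1) ×ˢ Finset.range (2 * d + 1), f p := by
    rw [subst1_eq_sum hG (d := 2 * d) (by omega)]
    have : ∀ n ∈ Finset.range (2 * d + 1),
        PowerSeries.coeff (R := S) n (w * w') * MvPowerSeries.coeff (R := S) m (G ^ n) =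
        ∑ p ∈ Finset.HasAntidiagonal.antidiagonal n, f p := by
      intro n _
      rw [PowerSeries.coeff_mul, Finset.sum_mul]
      apply Finset.sum_congr rfl
      intro p hp
      rw [Finset.HasAntidiagonal.mem_antidiagonal] at hp
      rw [hf]
      simp only []
      rw [hp]
    rw [Finset.sum_congr rfl this]
    rw [← Finset.sum_biUnion]
    · apply Finset.sum_subset
      · intro p hp
        rw [Finset.mem_biUnion] at hp
        obtain ⟨n, hn, hpn⟩ := hp
        rw [Finset.mem_range] at hn
        rw [Finset.HasAntidiagonal.mem_antidiagonal] at hpn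
        rw [Finset.mem_product, Finset.mem_range, Finset.mem_range]
        omega
      · intro p hp hnp
        apply hf0
        by_contra hc
        push_neg at hc
        apply hnp
        rw [Finset.mem_biUnion]
        exact ⟨p.1 + p.2, Finset.mem_range.mpr (by omega),
          Finset.HasAntidiagonal.mem_antidiagonal.mpr rfl⟩
    · intro a _ b _ hab
      apply Finset.disjoint_left.mpr
      intro p hpa hpb
      rw [Finset.HasAntidiagonal.mem_antidiagonal] at hpa hpb
      exact hab (hpa ▸ hpb ▸ rfl)
  have hR : MvPowerSeries.coeff (R := S) m (subst1 w G * subst1 w' G) =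
      ∑ p ∈ Finset.range (2 * d + 1) ×ˢ Finset.range (2 * d + 1), f p := by
    rw [MvPowerSeries.coeff_mul]
    have : ∀ q ∈ Finset.HasAntidiagonal.antidiagonal m,
        MvPowerSeries.coeff (R := S) q.1 (subst1 w G) * MvPowerSeries.coeff (R := S) q.2 (subst1 w' G)
        = ∑ p ∈ Finset.range (2 * d + 1) ×ˢ Finset.range (2 * d + 1),
            (PowerSeries.coeff (R := S) p.1 w * MvPowerSeries.coeff (R := S) q.1 (G ^ p.1)) *
            (PowerSeries.coeff (R := S) p.2 w' * MvPowerSeries.coeff (R := S) q.2 (G ^ p.2)) := by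
      intro q hq
      rw [Finset.HasAntidiagonal.mem_antidiagonal] at hq
      have hq1 : sdeg q.1 ≤ 2 * d := by
        have := sdeg_add q.1 q.2
        rw [hq] at this
        omega
      have hq2 : sdeg q.2 ≤ 2 * d := by
        have := sdeg_add q.1 q.2
        rw [hq] at this
        omega
      rw [subst1_eq_sum hG (d := 2 * d) hq1, subst1_eq_sum hG (d := 2 * d) hq2,
        Finset.sum_mul_sum, ← Finset.sum_product']
    rw [Finset.sum_congr rfl this, Finset.sum_comm]
    apply Finset.sum_congr rfl
    intro p _
    rw [hf]
    simp only []
    rw [pow_add, MvPowerSeries.coeff_mul, Finset.mul_sum]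
    apply Finset.sum_congr rfl
    intro q _
    ring
  rw [hL, hR]

lemma subst1_pow {w : PowerSeries S} {G : MvPowerSeries σ S}
    (hG : MvPowerSeries.coeff (R := S) 0 G = 0) (n : ℕ) :
    subst1 (w ^ n) G = (subst1 w G) ^ n := by
  induction n with
  | zero => rw [pow_zero, pow_zero, subst1_one hG]
  | succ n ih => rw [pow_succ, pow_succ, subst1_mul hG, ih]

lemma subst1_X {G : MvPowerSeries σ S} (hG : MvPowerSeries.coeff (R := S) 0 G = 0) :
    subst1 (PowerSeries.X : PowerSeries S) G = G := by
  apply MvPowerSeries.ext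
  intro m
  rw [subst1_eq_sum hG (d := sdeg m + 1) (by omega)]
  rw [Finset.sum_eq_single 1]
  · rw [PowerSeries.coeff_X, if_pos rfl, pow_one, one_mul]
  · intro j _ hj
    rw [PowerSeries.coeff_X, if_neg hj, zero_mul]
  · intro h
    exact absurd (Finset.mem_range.mpr (by omega)) h

lemma subst1_id {w : PowerSeries S} :
    subst1 w (PowerSeries.X : PowerSeries S) = w := by
  have hX : MvPowerSeries.coeff (R := S) (0 : Unit →₀ ℕ) (PowerSeries.X : PowerSeries S) = 0 := by
    rw [pcoeff0]
    simp
  apply MvPowerSeries.ext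
  intro m
  have hm : m = Finsupp.single () (m ()) := Finsupp.unique_single m
  rw [hm, pcoeff, pcoeff, subst1_eq_sum_unit hX (le_refl (m ()))]
  rw [Finset.sum_eq_single (m ())]
  · rw [PowerSeries.coeff_X_pow, if_pos rfl, mul_one]
  · intro j _ hj
    rw [PowerSeries.coeff_X_pow, if_neg (fun h => hj h.symm), mul_zero]
  · intro h
    exact absurd (Finset.mem_range.mpr (by omega)) h

lemma subst1_assoc {w G : PowerSeries S} {K : MvPowerSeries σ S}
    (hG : MvPowerSeries.coeff (R := S) 0 G = 0) (hK : MvPowerSeries.coeff (R := S) 0 K = 0) :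
    subst1 (subst1 w G) K = subst1 w (subst1 G K) := by
  have hG' : PowerSeries.coeff (R := S) 0 G = 0 := by rw [← pcoeff0]; exact hG
  have hA : MvPowerSeries.coeff (R := S) 0 (subst1 G K) = 0 := subst1_coeff_zero hG' hK
  apply MvPowerSeries.ext
  intro m
  set d := sdeg m with hd
  rw [subst1_eq_sum hK (le_refl d), subst1_eq_sum hA (le_refl d)]
  have hLHS : ∀ j ∈ Finset.range (d + 1),
      PowerSeries.coeff (R := S) j (subst1 w G) * MvPowerSeries.coeff (R := S) m (K ^ j) =
      ∑ i ∈ Finset.range (d + 1),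
        PowerSeries.coeff (R := S) i w * PowerSeries.coeff (R := S) j (G ^ i) *
          MvPowerSeries.coeff (R := S) m (K ^ j) := by
    intro j hj
    rw [Finset.mem_range] at hj
    rw [subst1_eq_sum_unit hG (d := d) (by omega), Finset.sum_mul]
  have hRHS : ∀ i ∈ Finset.range (d + 1),
      PowerSeries.coeff (R := S) i w * MvPowerSeries.coeff (R := S) m ((subst1 G K) ^ i) =
      ∑ j ∈ Finset.range (d + 1),
        PowerSeries.coeff (R := S) i w * PowerSeries.coeff (R := S) j (G ^ i) *
          MvPowerSeries.coeff (R := S) m (K ^ j) := by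
    intro i _
    rw [← subst1_pow hK, subst1_eq_sum hK (le_refl d), Finset.mul_sum]
    apply Finset.sum_congr rfl
    intro j _
    rw [mul_assoc]
  rw [Finset.sum_congr rfl hLHS, Finset.sum_congr rfl hRHS, Finset.sum_comm]

lemma mapCoeffs_eq_map (φ : S →+* T) (F : MvPowerSeries σ S) :
    mapCoeffs ⇑φ F = MvPowerSeries.map (σ := σ) φ F := by
  funext m
  show φ (F m) = MvPowerSeries.map (σ := σ) φ F m
  rw [show MvPowerSeries.map (σ := σ) φ F m = MvPowerSeries.coeff (R := T) m (MvPowerSeries.map (σ := σ) φ F)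
    from rfl, MvPowerSeries.coeff_map]
  rfl

lemma mapCoeffs_coeff (φ : S →+* T) (F : MvPowerSeries σ S) (m : σ →₀ ℕ) :
    MvPowerSeries.coeff (R := T) m (mapCoeffs ⇑φ F) = φ (MvPowerSeries.coeff (R := S) m F) := rfl

lemma map_subst1 (φ : S →+* T) {w : PowerSeries S} {G : MvPowerSeries σ S}
    (hG : MvPowerSeries.coeff (R := S) 0 G = 0) :
    mapCoeffs ⇑φ (subst1 w G) = subst1 (mapCoeffs ⇑φ w) (mapCoeffs ⇑φ G) := by
  have hG' : MvPowerSeries.coeff (R := T) 0 (mapCoeffs ⇑φ G) = 0 := by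
    rw [mapCoeffs_coeff, hG, map_zero]
  apply MvPowerSeries.ext
  intro m
  rw [mapCoeffs_coeff, subst1_eq_sum hG (le_refl (sdeg m)),
    subst1_eq_sum hG' (le_refl (sdeg m)), map_sum]
  apply Finset.sum_congr rfl
  intro n _
  rw [map_mul, show mapCoeffs ⇑φ G ^ n = mapCoeffs ⇑φ (G ^ n) by
      rw [mapCoeffs_eq_map, mapCoeffs_eq_map, map_pow], mapCoeffs_coeff]
  rfl

lemma mapCoeffs_X (φ : S →+* T) :
    mapCoeffs ⇑φ (PowerSeries.X : PowerSeries S) = (PowerSeries.X : PowerSeries T) := by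
  rw [mapCoeffs_eq_map]
  exact MvPowerSeries.map_X φ ()


lemma coeff_pow_self {G : PowerSeries S} (hG : MvPowerSeries.coeff (R := S) 0 G = 0) (n : ℕ) :
    PowerSeries.coeff (R := S) n (G ^ n) = (PowerSeries.coeff (R := S) 1 G) ^ n := by
  induction n with
  | zero => simp
  | succ n ih =>
    rw [pow_succ, PowerSeries.coeff_mul, Finset.sum_eq_single (n, 1)]
    · rw [ih, pow_succ]
    · intro p hp hne
      rw [Finset.HasAntidiagonal.mem_antidiagonal] at hp
      by_cases h1 : p.2 = 0
      · rw [h1, ← pcoeff0, hG, mul_zero]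
      · have h2 : 2 ≤ p.2 := by
          rcases Nat.lt_or_ge p.2 2 with h | h
          · interval_cases h' : p.2
            · exact absurd rfl h1
            · exfalso
              apply hne
              have : p.1 = n := by omega
              exact Prod.ext this h'
          · exact h
        rw [coeff_pow_of_lt' hG (by omega), zero_mul]
    · intro h
      exact absurd (Finset.HasAntidiagonal.mem_antidiagonal.mpr (by omega)) h

/-- Coefficients of the compositional left inverse, by strong recursion. -/
def linvC (binv : S) (g : PowerSeries S) : ℕ → S
  | 0 => 0
  | n + 1 =>
    binv ^ (n + 1) * ((if n = 0 then (1 : S) else 0) -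
      ∑ j ∈ (Finset.range (n + 1)).attach,
        linvC binv g j.1 * PowerSeries.coeff (R := S) (n + 1) (g ^ (j.1 : ℕ)))
  decreasing_by exact Finset.mem_range.mp j.2

lemma subst1_linvC {g : PowerSeries S} {binv : S}
    (hg0 : MvPowerSeries.coeff (R := S) 0 g = 0) (hb : binv * PowerSeries.coeff (R := S) 1 g = 1) :
    subst1 (PowerSeries.mk (linvC binv g)) g = (PowerSeries.X : PowerSeries S) := by
  apply MvPowerSeries.ext
  intro m
  have hm : m = Finsupp.single () (m ()) := Finsupp.unique_single m
  rw [hm, pcoeff, pcoeff]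
  cases hn : m () with
  | zero =>
    rw [subst1_eq_sum_unit hg0 (le_refl 0)]
    simp [PowerSeries.coeff_mk, linvC]
  | succ n =>
    rw [subst1_eq_sum_unit hg0 (le_refl (n + 1)), Finset.sum_range_succ,
      PowerSeries.coeff_mk, coeff_pow_self hg0]
    have hrec : linvC binv g (n + 1) =
        binv ^ (n + 1) * ((if n = 0 then (1 : S) else 0) -
          ∑ j ∈ Finset.range (n + 1),
            linvC binv g j * PowerSeries.coeff (R := S) (n + 1) (g ^ j)) := by
      rw [linvC]
      congr 1
      congr 1
      exact Finset.sum_attach (Finset.range (n + 1))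
        (fun j => linvC binv g j * PowerSeries.coeff (R := S) (n + 1) (g ^ j))
    have hpow : binv ^ (n + 1) * (PowerSeries.coeff (R := S) 1 g) ^ (n + 1) = 1 := by
      rw [← mul_pow, hb, one_pow]
    have hsum : ∀ j ∈ Finset.range (n + 1),
        PowerSeries.coeff (R := S) j (PowerSeries.mk (linvC binv g)) *
          PowerSeries.coeff (R := S) (n + 1) (g ^ j) =
        linvC binv g j * PowerSeries.coeff (R := S) (n + 1) (g ^ j) := by
      intro j _
      rw [PowerSeries.coeff_mk]
    rw [Finset.sum_congr rfl hsum, hrec, PowerSeries.coeff_X]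
    set Ssum := ∑ j ∈ Finset.range (n + 1), linvC binv g j * PowerSeries.coeff (R := S) (n + 1) (g ^ j)
    have : Ssum + binv ^ (n + 1) * ((if n = 0 then (1 : S) else 0) - Ssum) *
        (PowerSeries.coeff (R := S) 1 g) ^ (n + 1) =
        Ssum + (binv ^ (n + 1) * (PowerSeries.coeff (R := S) 1 g) ^ (n + 1)) *
          ((if n = 0 then (1 : S) else 0) - Ssum) := by ring
    rw [this, hpow, one_mul]
    by_cases h0 : n = 0
    · rw [if_pos h0, if_pos (by omega)]
      ring
    · rw [if_neg h0, if_neg (by omega)]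
      ring

lemma exists_comp_inverse {g : PowerSeries S}
    (hg0 : MvPowerSeries.coeff (R := S) 0 g = 0) {binv : S}
    (hb : binv * PowerSeries.coeff (R := S) 1 g = 1) :
    ∃ k : PowerSeries S, PowerSeries.coeff (R := S) 0 k = 0 ∧
      subst1 g k = (PowerSeries.X : PowerSeries S) ∧
      subst1 k g = (PowerSeries.X : PowerSeries S) := by
  set k := PowerSeries.mk (linvC binv g) with hk
  have hkg : subst1 k g = PowerSeries.X := subst1_linvC hg0 hb
  have hk0 : MvPowerSeries.coeff (R := S) 0 k = 0 := by
    rw [pcoeff0, hk, PowerSeries.coeff_mk]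
    simp [linvC]
  have hk1 : PowerSeries.coeff (R := S) 1 k = binv := by
    rw [hk, PowerSeries.coeff_mk, show (1 : ℕ) = 0 + 1 from rfl, linvC]
    rw [Finset.sum_attach (Finset.range (0 + 1))
      (fun j => linvC binv g j * PowerSeries.coeff (R := S) (0 + 1) (g ^ j))]
    simp [linvC]
  have hb' : PowerSeries.coeff (R := S) 1 g * PowerSeries.coeff (R := S) 1 k = 1 := by
    rw [hk1, mul_comm]
    exact hb
  set k2 := PowerSeries.mk (linvC (PowerSeries.coeff (R := S) 1 g) k) with hk2
  have hk2k : subst1 k2 k = PowerSeries.X := subst1_linvC hk0 hb'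
  have hassoc : subst1 (subst1 k2 k) g = subst1 k2 (subst1 k g) := subst1_assoc hk0 hg0
  rw [hk2k, hkg, subst1_X hg0, subst1_id] at hassoc
  -- hassoc : g = k2
  refine ⟨k, by rw [← pcoeff0]; exact hk0, ?_, hkg⟩
  rw [hassoc]
  exact hk2k


lemma sdeg_fin2_le (m : Fin 2 →₀ ℕ) : sdeg m ≤ m 0 + m 1 := by
  rw [sdeg, Finsupp.sum]
  calc ∑ i ∈ m.support, m i ≤ ∑ i : Fin 2, m i :=
        Finset.sum_le_sum_of_subset (Finset.subset_univ _)
    _ = m 0 + m 1 := by rw [Fin.sum_univ_two]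

lemma mv_coeff_apply (F : MvPowerSeries σ S) (m : σ →₀ ℕ) :
    MvPowerSeries.coeff (R := S) m F = F m := rfl

end Lemmas

/-- `𝔤` has a compositional inverse `𝔤⁻¹ ∈ H_ℚ[[x]]`, and `𝔉` is
recovered as `𝔉(x⊗1,1⊗x) = (Δ(𝔤⁻¹))(c + (𝔤⊗1)(x⊗1) + (1⊗𝔤)(1⊗x))`, the substitution
being understood in the topology defined by the powers of the augmentation ideal
`ker(ε⊗ε)` (this is well defined since `(ε⊗ε)` applied to the constant term `c` of the
argument is `0`): modulo every power `ker(ε⊗ε)^k`, each coefficient of `𝔉` agrees with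
the corresponding partial sum of the substituted series. -/
theorem stmt10
    (R : Type*) [CommRing R] [NoZeroSMulDivisors ℤ R]
    (H : Type*) [CommRing H] [HopfAlgebra R H]
    (Rq : Type*) [CommRing Rq] [Algebra ℚ Rq]
    (Hq : Type*) [CommRing Hq] [HopfAlgebra Rq Hq] [Algebra ℚ Hq]
    [IsScalarTower ℚ Rq Hq]
    (ιR : R →+* Rq) (ι : H →+* Hq) (ιι : H ⊗[R] H →+* Hq ⊗[Rq] Hq)
    (halg : ∀ r : R, ι (algebraMap R H r) = algebraMap Rq Hq (ιR r))
    (hιι : ∀ h k : H, ιι (h ⊗ₜ[R] k) = ι h ⊗ₜ[Rq] ι k)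
    (hιε : ∀ h : H, Coalgebra.counit (R := Rq) (ι h) = ιR (Coalgebra.counit (R := R) h))
    (hιΔ : ∀ h : H, Coalgebra.comul (R := Rq) (ι h) = ιι (Coalgebra.comul (R := R) h))
    (F : MvPowerSeries (Fin 2) (H ⊗[R] H)) (hF : IsCommFormalGroup R H F)
    (Fq : MvPowerSeries (Fin 2) (Hq ⊗[Rq] Hq)) (hFq : Fq = mapCoeffs (⇑ιι) F)
    (w : PowerSeries Hq)
    (hw : w = PowerSeries.mk fun n =>
      idCounit Rq Hq (Fq (Finsupp.single 0 n + Finsupp.single 1 1)))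
    (hb0 : IsUnit (idCounit Rq Hq (Fq (Finsupp.single 1 1))))
    (winv : PowerSeries Hq) (hwinv : winv * w = 1)
    (g : PowerSeries Hq)
    (hg : g = PowerSeries.mk fun n =>
      if n = 0 then 0 else ((n : ℚ)⁻¹) • PowerSeries.coeff (R := Hq) (n - 1) winv)
    (c : Hq ⊗[Rq] Hq)
    (hc₁ : idCounit Rq Hq c = 0) (hc₂ : counitId Rq Hq c = 0)
    (heq : subst1 (mapCoeffs (⇑(Coalgebra.comul (R := Rq) (A := Hq))) g) Fq =
      MvPowerSeries.C (σ := Fin 2) (R := Hq ⊗[Rq] Hq) c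
        + inVar0 (fun b => b ⊗ₜ[Rq] (1 : Hq)) g
        + inVar1 (fun b => (1 : Hq) ⊗ₜ[Rq] b) g)
    (Garg : MvPowerSeries (Fin 2) (Hq ⊗[Rq] Hq))
    (hGarg : Garg = MvPowerSeries.C (σ := Fin 2) (R := Hq ⊗[Rq] Hq) c
        + inVar0 (fun b => b ⊗ₜ[Rq] (1 : Hq)) g
        + inVar1 (fun b => (1 : Hq) ⊗ₜ[Rq] b) g)
    (εε : Hq ⊗[Rq] Hq →ₐ[Rq] Rq)
    (hεε : εε = (Algebra.TensorProduct.lmul' Rq).comp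
      (Algebra.TensorProduct.map (Bialgebra.counitAlgHom Rq Hq)
        (Bialgebra.counitAlgHom Rq Hq))) :
    ∃ ginv : PowerSeries Hq,
      PowerSeries.coeff (R := Hq) 0 ginv = 0 ∧
      subst1 g ginv = (PowerSeries.X : PowerSeries Hq) ∧
      subst1 ginv g = (PowerSeries.X : PowerSeries Hq) ∧
      ∀ (k : ℕ) (m : Fin 2 →₀ ℕ),
        MvPowerSeries.coeff (R := (Hq ⊗[Rq] Hq)) m Fq -
          ∑ n ∈ Finset.range (k + m 0 + m 1 + 1),
            PowerSeries.coeff (R := (Hq ⊗[Rq] Hq)) n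
              (mapCoeffs (⇑(Coalgebra.comul (R := Rq) (A := Hq))) ginv) *
              MvPowerSeries.coeff (R := (Hq ⊗[Rq] Hq)) m (Garg ^ n)
          ∈ RingHom.ker εε.toRingHom ^ k := by
  classical
  have hg0' : MvPowerSeries.coeff (R := Hq) (0 : Unit →₀ ℕ) g = 0 := by
    rw [pcoeff0, hg, PowerSeries.coeff_mk]
    simp
  have hbinv : (PowerSeries.coeff (R := Hq) 0 w) * PowerSeries.coeff (R := Hq) 1 g = 1 := by
    have h1 : PowerSeries.coeff (R := Hq) 1 g = PowerSeries.coeff (R := Hq) 0 winv := by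
      rw [hg, PowerSeries.coeff_mk]
      norm_num
    have h2 : PowerSeries.coeff (R := Hq) 0 winv * PowerSeries.coeff (R := Hq) 0 w = 1 := by
      have h := congrArg (PowerSeries.constantCoeff (R := Hq)) hwinv
      rw [map_mul, map_one] at h
      rwa [PowerSeries.coeff_zero_eq_constantCoeff_apply,
        PowerSeries.coeff_zero_eq_constantCoeff_apply]
    rw [h1, mul_comm]
    exact h2
  obtain ⟨ginv, hginv0, hgk, hkg⟩ := exists_comp_inverse hg0' hbinv
  refine ⟨ginv, hginv0, hgk, hkg, ?_⟩
  intro k m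
  set φ := (Bialgebra.comulAlgHom Rq Hq).toRingHom with hφdef
  have hfun : ⇑(Coalgebra.comul (R := Rq) (A := Hq)) = ⇑φ := by
    funext a
    show Coalgebra.comul a = Bialgebra.comulAlgHom Rq Hq a
    rw [Bialgebra.comulAlgHom_apply]
  have hFq0 : MvPowerSeries.coeff (R := (Hq ⊗[Rq] Hq)) 0 Fq = 0 := by
    rw [hFq, mapCoeffs_coeff, mv_coeff_apply, hF.1, map_zero]
  have hu0 : MvPowerSeries.coeff (R := (Hq ⊗[Rq] Hq)) (0 : Unit →₀ ℕ)
      (mapCoeffs (⇑(Coalgebra.comul (R := Rq) (A := Hq))) g) = 0 := by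
    rw [hfun, mapCoeffs_coeff, hg0', map_zero]
  have hGarg' : Garg = subst1 (mapCoeffs (⇑(Coalgebra.comul (R := Rq) (A := Hq))) g) Fq := by
    rw [hGarg, ← heq]
  have hGarg0 : MvPowerSeries.coeff (R := (Hq ⊗[Rq] Hq)) 0 Garg = 0 := by
    rw [hGarg']
    exact subst1_coeff_zero (by rw [← pcoeff0]; exact hu0) hFq0
  have hvu : subst1 (mapCoeffs (⇑(Coalgebra.comul (R := Rq) (A := Hq))) ginv)
      (mapCoeffs (⇑(Coalgebra.comul (R := Rq) (A := Hq))) g) = PowerSeries.X := by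
    rw [hfun, ← map_subst1 φ hg0', hkg, mapCoeffs_X]
  have hFqv : Fq = subst1 (mapCoeffs (⇑(Coalgebra.comul (R := Rq) (A := Hq))) ginv) Garg := by
    rw [hGarg']
    calc Fq = subst1 PowerSeries.X Fq := (subst1_X hFq0).symm
      _ = subst1 (subst1 (mapCoeffs (⇑(Coalgebra.comul (R := Rq) (A := Hq))) ginv)
            (mapCoeffs (⇑(Coalgebra.comul (R := Rq) (A := Hq))) g)) Fq := by rw [hvu]
      _ = _ := subst1_assoc hu0 hFq0
  have hkey : MvPowerSeries.coeff (R := (Hq ⊗[Rq] Hq)) m Fq =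
      ∑ n ∈ Finset.range (k + m 0 + m 1 + 1),
        PowerSeries.coeff (R := (Hq ⊗[Rq] Hq)) n
          (mapCoeffs (⇑(Coalgebra.comul (R := Rq) (A := Hq))) ginv) *
          MvPowerSeries.coeff (R := (Hq ⊗[Rq] Hq)) m (Garg ^ n) := by
    conv_lhs => rw [hFqv]
    exact subst1_eq_sum hGarg0 (d := k + m 0 + m 1) (le_trans (sdeg_fin2_le m) (by omega))
  rw [hkey, sub_self]
  exact zero_mem _


end FGHopf
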